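/- Let N ∈ ℕ and d ∈ ℝ, let a : ℕ → ℝ be the even-parity QES coefficient sequence for parameters (N, d), and assume a(N+1) = 0. Define ψ : ℝ → ℝ by ψ(x) = e^{−x²/2 + d·|x|} · Σ_{k=0}^{N} a(k)·|x|^k. Then ψ is differentiable at 0 with ψ'(0) = 0, and for every x ≠ 0, ψ is twice differentiable at x and satisfies −ψ''(x) + (|x| − d)²·ψ(x) = (2N + 1)·ψ(x). -/

import Mathlib

private lemma qes_sum_deriv (N : ℕ) (c : ℕ → ℝ) (hc : c (N+1) = 0) (t : ℝ) :
    HasDerivAt (fun s : ℝ => ∑ k ∈ Finset.range (N+1), c k * s ^ k)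
      (∑ k ∈ Finset.range (N+1), ((k:ℝ)+1) * c (k+1) * t ^ k) t := by
  have h : HasDerivAt (fun s : ℝ => ∑ k ∈ Finset.range (N+1), c k * s ^ k)
      (∑ k ∈ Finset.range (N+1), c k * ((k:ℝ) * t ^ (k-1))) t :=
    HasDerivAt.fun_sum fun k _ => (hasDerivAt_pow k t).const_mul (c k)
  convert h using 1
  rw [Finset.sum_range_succ' (fun k => c k * ((k:ℝ) * t ^ (k-1))) N,
      Finset.sum_range_succ (fun k => ((k:ℝ)+1) * c (k+1) * t ^ k) N]
  simp [hc]
  exact Finset.sum_congr rfl fun k _ => by ring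

noncomputable def qS (N : ℕ) (a : ℕ → ℝ) (t : ℝ) : ℝ :=
  ∑ k ∈ Finset.range (N+1), a k * t ^ k

noncomputable def qS1 (N : ℕ) (a : ℕ → ℝ) (t : ℝ) : ℝ :=
  ∑ k ∈ Finset.range (N+1), ((k:ℝ)+1) * a (k+1) * t ^ k

noncomputable def qS2 (N : ℕ) (a : ℕ → ℝ) (t : ℝ) : ℝ :=
  ∑ k ∈ Finset.range (N+1), ((k:ℝ)+1) * (((k:ℝ)+1)+1) * a (k+2) * t ^ k

noncomputable def qf (N : ℕ) (d : ℝ) (a : ℕ → ℝ) (t : ℝ) : ℝ :=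
  Real.exp (-t^2/2 + d*t) * qS N a t

noncomputable def qf1 (N : ℕ) (d : ℝ) (a : ℕ → ℝ) (t : ℝ) : ℝ :=
  Real.exp (-t^2/2 + d*t) * ((d - t) * qS N a t + qS1 N a t)

noncomputable def qf2 (N : ℕ) (d : ℝ) (a : ℕ → ℝ) (t : ℝ) : ℝ :=
  Real.exp (-t^2/2 + d*t) *
    (((d - t)^2 - 1) * qS N a t + 2*(d - t) * qS1 N a t + qS2 N a t)

section aux
variable (N : ℕ) (d : ℝ) (a : ℕ → ℝ)

lemma qS_deriv (hterm : a (N+1) = 0) (t : ℝ) :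
    HasDerivAt (qS N a) (qS1 N a t) t :=
  qes_sum_deriv N a hterm t

lemma qS1_deriv (h2 : a (N+2) = 0) (t : ℝ) :
    HasDerivAt (qS1 N a) (qS2 N a t) t := by
  have h := qes_sum_deriv N (fun k => ((k:ℝ)+1) * a (k+1))
    (by simp [h2]) t
  convert h using 1
  · rfl
  exact Finset.sum_congr rfl fun k _ => by push_cast; ring

lemma qg_deriv (t : ℝ) :
    HasDerivAt (fun t : ℝ => -t^2/2 + d*t) (d - t) t := by
  have h : HasDerivAt (fun t : ℝ => -t^2/2 + d*t)
      (-((2:ℕ) * t ^ (2-1))/2 + d * 1) t :=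
    (((hasDerivAt_pow 2 t).neg.div_const 2).add ((hasDerivAt_id t).const_mul d))
  convert h using 1
  push_cast; ring

lemma qf_deriv (hterm : a (N+1) = 0) (t : ℝ) :
    HasDerivAt (qf N d a) (qf1 N d a t) t := by
  have h := ((qg_deriv d t).exp.mul (qS_deriv N a hterm t))
  refine h.congr_deriv ?_
  simp only [qf1]; ring

lemma qf1_deriv (hterm : a (N+1) = 0) (h2 : a (N+2) = 0) (t : ℝ) :
    HasDerivAt (qf1 N d a) (qf2 N d a t) t := by
  have hu : HasDerivAt (fun t : ℝ => (d - t) * qS N a t + qS1 N a t)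
      ((-1) * qS N a t + (d - t) * qS1 N a t + qS2 N a t) t :=
    (((hasDerivAt_id t).const_sub d).mul (qS_deriv N a hterm t)).add
      (qS1_deriv N a h2 t)
  have h := ((qg_deriv d t).exp.mul hu)
  refine h.congr_deriv ?_
  simp only [qf2]; ring

end aux

section key
variable (N : ℕ) (d : ℝ) (a : ℕ → ℝ)

lemma qkey
    (hrec : ∀ n : ℕ, (2 * (N : ℝ) - 2 * n) * a n + 2 * d * (n + 1) * a (n + 1)
      + (n + 1) * (n + 2) * a (n + 2) = 0)
    (hterm : a (N + 1) = 0) (t : ℝ) :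
    qS2 N a t + 2*(d - t) * qS1 N a t + 2*(N:ℝ) * qS N a t = 0 := by
  have ht : t * qS1 N a t = ∑ k ∈ Finset.range (N+1), (k:ℝ) * a k * t ^ k := by
    calc t * qS1 N a t
        = ∑ k ∈ Finset.range (N+1), (fun k : ℕ => (k:ℝ) * a k * t ^ k) (k+1) := by
          rw [qS1, Finset.mul_sum]
          exact Finset.sum_congr rfl fun k _ => by push_cast; ring
      _ = ∑ k ∈ Finset.range (N+2), (k:ℝ) * a k * t ^ k := by
          rw [Finset.sum_range_succ' (fun k : ℕ => (k:ℝ) * a k * t ^ k) (N+1)]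
          simp
      _ = ∑ k ∈ Finset.range (N+1), (k:ℝ) * a k * t ^ k := by
          rw [Finset.sum_range_succ]
          simp [hterm]
  have expand : qS2 N a t + 2*(d - t) * qS1 N a t + 2*(N:ℝ) * qS N a t
      = ∑ k ∈ Finset.range (N+1),
          ((2 * (N:ℝ) - 2 * k) * a k + 2 * d * ((k:ℝ) + 1) * a (k + 1)
            + ((k:ℝ) + 1) * ((k:ℝ) + 2) * a (k + 2)) * t ^ k := by
    have h2 : 2*(d - t) * qS1 N a t = 2*d*qS1 N a t - 2*(t * qS1 N a t) := by ring
    rw [h2, ht]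
    simp only [qS, qS1, qS2, Finset.mul_sum, ← Finset.sum_sub_distrib,
      ← Finset.sum_add_distrib]
    exact Finset.sum_congr rfl fun k _ => by ring
  rw [expand]
  refine Finset.sum_eq_zero fun k _ => ?_
  rw [show (2 * (N:ℝ) - 2 * k) * a k + 2 * d * ((k:ℝ) + 1) * a (k + 1)
      + ((k:ℝ) + 1) * ((k:ℝ) + 2) * a (k + 2) = 0 from by
    linear_combination hrec k, zero_mul]

lemma qODE
    (hrec : ∀ n : ℕ, (2 * (N : ℝ) - 2 * n) * a n + 2 * d * (n + 1) * a (n + 1)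
      + (n + 1) * (n + 2) * a (n + 2) = 0)
    (hterm : a (N + 1) = 0) (t : ℝ) :
    -(qf2 N d a t) + (t - d)^2 * qf N d a t = (2*(N:ℝ) + 1) * qf N d a t := by
  have hk := qkey N d a hrec hterm t
  simp only [qf, qf2]
  linear_combination (-(Real.exp (-t^2/2 + d*t))) * hk
end key

/-- A terminating even-parity QES solution yields an exact bound state: the
symmetrized wave function `ψ(x) = e^{−x²/2+d|x|}·Σ_{k≤N} a_k |x|^k` matches
smoothly at the origin (`ψ'(0) = 0`) and solves the Schrödinger equation
`−ψ'' + (|x|−d)²ψ = (2N+1)ψ` away from the origin. -/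
theorem even_parity_QES_bound_state (N : ℕ) (d : ℝ) (a : ℕ → ℝ)
    (h0 : a 0 = 1) (h1 : a 1 = -d)
    (hrec : ∀ n : ℕ, (2 * (N : ℝ) - 2 * n) * a n + 2 * d * (n + 1) * a (n + 1)
      + (n + 1) * (n + 2) * a (n + 2) = 0)
    (hterm : a (N + 1) = 0) (ψ : ℝ → ℝ)
    (hψ : ∀ x : ℝ, ψ x = Real.exp (-x ^ 2 / 2 + d * |x|)
      * ∑ k ∈ Finset.range (N + 1), a k * |x| ^ k) :
    (DifferentiableAt ℝ ψ 0 ∧ deriv ψ 0 = 0) ∧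
      ∀ x : ℝ, x ≠ 0 →
        DifferentiableAt ℝ ψ x ∧ DifferentiableAt ℝ (deriv ψ) x ∧
          -(deriv (deriv ψ) x) + (|x| - d) ^ 2 * ψ x = (2 * (N : ℝ) + 1) * ψ x := by
  have h2 : a (N + 2) = 0 := by
    have hp : (((N:ℝ)+1)*((N:ℝ)+2)) ≠ 0 := by positivity
    have hz : (((N:ℝ)+1)*((N:ℝ)+2)) * a (N+2) = 0 := by
      linear_combination hrec N - 2*d*((N:ℝ)+1)*hterm
    exact (mul_eq_zero.mp hz).resolve_left hp
  have hψf : ∀ x : ℝ, ψ x = qf N d a |x| := by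
    intro x
    rw [hψ x]
    simp only [qf, qS, sq_abs]
  have hS0 : qS N a 0 = 1 := by
    rw [qS, Finset.sum_range_succ']; simp [h0]
  have hS10 : qS1 N a 0 = -d := by
    rw [qS1, Finset.sum_range_succ']; simp [h1]
  have hf1_0 : qf1 N d a 0 = 0 := by
    rw [qf1, hS0, hS10]; norm_num
  constructor
  · -- at the origin
    have hf0 : HasDerivAt (qf N d a) 0 0 := by have h := qf_deriv N d a hterm 0; rwa [hf1_0] at h
    have hψ0 : HasDerivAt ψ 0 0 := by
      rw [hasDerivAt_iff_isLittleO] at hf0 ⊢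
      simp only [sub_zero, smul_zero] at hf0 ⊢
      have habs : Filter.Tendsto (fun x : ℝ => |x|) (nhds 0) (nhds (0:ℝ)) := by
        simpa using (continuous_abs.tendsto (0:ℝ))
      have hcomp := hf0.comp_tendsto habs
      simp only [Function.comp_def] at hcomp
      have hO : (fun x : ℝ => |x|) =O[nhds 0] (fun x : ℝ => x) :=
        Asymptotics.isBigO_of_le _ (fun x => by simp)
      have h3 := hcomp.trans_isBigO hO
      have hfun : (fun x : ℝ => ψ x - ψ 0)
          = fun x : ℝ => qf N d a |x| - qf N d a 0 :=
        funext fun x => by rw [hψf x, hψf 0, abs_zero]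
      rw [hfun]
      exact h3
    exact ⟨hψ0.differentiableAt, hψ0.deriv⟩
  · intro x hx
    rcases lt_or_gt_of_ne hx with hneg | hpos
    · -- x < 0
      have hmem : Set.Iio (0:ℝ) ∈ nhds x := isOpen_Iio.mem_nhds hneg
      have hF : ∀ y : ℝ, HasDerivAt (fun y : ℝ => qf N d a (-y))
          (-(qf1 N d a (-y))) y := fun y => by
        have h := (qf_deriv N d a hterm (-y)).comp y (hasDerivAt_neg y)
        exact h.congr_deriv (by ring)
      have hF1 : ∀ y : ℝ, HasDerivAt (fun y : ℝ => -(qf1 N d a (-y)))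
          (qf2 N d a (-y)) y := fun y => by
        have h := ((qf1_deriv N d a hterm h2 (-y)).comp y (hasDerivAt_neg y)).neg
        exact h.congr_deriv (by ring)
      have heq : ψ =ᶠ[nhds x] fun y : ℝ => qf N d a (-y) := by
        filter_upwards [hmem] with y hy
        rw [hψf y, abs_of_neg hy]
      have heqd : deriv ψ =ᶠ[nhds x] fun y : ℝ => -(qf1 N d a (-y)) := by
        filter_upwards [hmem] with y hy
        have heqy : ψ =ᶠ[nhds y] fun z : ℝ => qf N d a (-z) := by
          filter_upwards [isOpen_Iio.mem_nhds hy] with z hz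
          rw [hψf z, abs_of_neg hz]
        rw [heqy.deriv_eq, (hF y).deriv]
      refine ⟨(hF x).differentiableAt.congr_of_eventuallyEq heq,
        (hF1 x).differentiableAt.congr_of_eventuallyEq heqd, ?_⟩
      have hdd : deriv (deriv ψ) x = qf2 N d a (-x) := by
        rw [heqd.deriv_eq, (hF1 x).deriv]
      rw [hdd, hψf x, abs_of_neg hneg]
      exact qODE N d a hrec hterm (-x)
    · -- x > 0
      have hmem : Set.Ioi (0:ℝ) ∈ nhds x := isOpen_Ioi.mem_nhds hpos
      have heq : ψ =ᶠ[nhds x] qf N d a := by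
        filter_upwards [hmem] with y hy
        rw [hψf y, abs_of_pos hy]
      have heqd : deriv ψ =ᶠ[nhds x] qf1 N d a := by
        filter_upwards [hmem] with y hy
        have heqy : ψ =ᶠ[nhds y] qf N d a := by
          filter_upwards [isOpen_Ioi.mem_nhds hy] with z hz
          rw [hψf z, abs_of_pos hz]
        rw [heqy.deriv_eq, (qf_deriv N d a hterm y).deriv]
      refine ⟨(qf_deriv N d a hterm x).differentiableAt.congr_of_eventuallyEq heq,
        (qf1_deriv N d a hterm h2 x).differentiableAt.congr_of_eventuallyEq heqd, ?_⟩
      have hdd : deriv (deriv ψ) x = qf2 N d a x := by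
        rw [heqd.deriv_eq, (qf1_deriv N d a hterm h2 x).deriv]
      rw [hdd, hψf x, abs_of_pos hpos]
      exact qODE N d a hrec hterm x
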